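/- The natural homomorphism from the free product of three copies of ℤ/2, presented as ⟨a,b,c | a² = b² = c² = 1⟩, to the group P, sending the generators a, b, c to the generators a, b, c of P, is injective; in other words, the subgroup H_3 of H_4 generated by a, b, c is isomorphic to ⟨a⟩_2 * ⟨b⟩_2 * ⟨c⟩_2. -/

import Mathlib

/-- The commutator `[x, y] = x⁻¹y⁻¹xy`. -/
def gcomm {G : Type*} [Group G] (x y : G) : G := x⁻¹ * y⁻¹ * x * y

/-- The generators of the free group on four letters `a, b, c, d`. -/
def y : Fin 4 → FreeGroup (Fin 4) := FreeGroup.of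

/-- The relators of the group `P`:
`a², b², c², d², [(ab)², (cd)²], [(ac)², (bd)²], [(ad)², (bc)²]`. -/
def relsP : Set (FreeGroup (Fin 4)) :=
  {y 0 ^ 2, y 1 ^ 2, y 2 ^ 2, y 3 ^ 2,
    gcomm ((y 0 * y 1) ^ 2) ((y 2 * y 3) ^ 2),
    gcomm ((y 0 * y 2) ^ 2) ((y 1 * y 3) ^ 2),
    gcomm ((y 0 * y 3) ^ 2) ((y 1 * y 2) ^ 2)}

/-- The group `P = ⟨a,b,c,d | a² = b² = c² = d² = 1, [(ab)²,(cd)²] = [(ac)²,(bd)²] = [(ad)²,(bc)²] = 1⟩`. -/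
abbrev P : Type := PresentedGroup relsP

/-- The relators `a², b², c²` of the free product `ℤ/2 * ℤ/2 * ℤ/2`. -/
def relsA3 : Set (FreeGroup (Fin 3)) :=
  {FreeGroup.of 0 ^ 2, FreeGroup.of 1 ^ 2, FreeGroup.of 2 ^ 2}

/-- The free product `⟨a,b,c | a² = b² = c² = 1⟩ = ℤ/2 * ℤ/2 * ℤ/2`. -/
abbrev A3 : Type := PresentedGroup relsA3

lemma sqP (i : Fin 4) : (PresentedGroup.of (rels := relsP) i) ^ 2 = 1 := by
  have h : (y i ^ 2) ∈ Subgroup.normalClosure relsP := by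
    apply Subgroup.subset_normalClosure
    fin_cases i <;> simp [relsP]
  have : (QuotientGroup.mk (y i ^ 2) : P) = 1 := (QuotientGroup.eq_one_iff _).2 h
  exact this

lemma sqA (i : Fin 3) : (PresentedGroup.of (rels := relsA3) i) ^ 2 = 1 := by
  have h : (FreeGroup.of i ^ 2) ∈ Subgroup.normalClosure relsA3 := by
    apply Subgroup.subset_normalClosure
    fin_cases i <;> simp [relsA3]
  have : (QuotientGroup.mk (FreeGroup.of i ^ 2) : A3) = 1 := (QuotientGroup.eq_one_iff _).2 h
  exact this

/-- map for ψ : A3 → P -/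
def f3 : Fin 3 → P := fun i => PresentedGroup.of (Fin.castSucc i)

/-- map for φ : P → A3 (retraction), sending d ↦ 1 -/
def g4 : Fin 4 → A3 :=
  ![PresentedGroup.of 0, PresentedGroup.of 1, PresentedGroup.of 2, 1]

lemma hf3 : ∀ r ∈ relsA3, FreeGroup.lift f3 r = 1 := by
  intro r hr
  simp only [relsA3, Set.mem_insert_iff, Set.mem_singleton_iff] at hr
  rcases hr with h | h | h <;> subst h <;>
    simp [f3, sqP]

lemma hg4 : ∀ r ∈ relsP, FreeGroup.lift g4 r = 1 := by
  intro r hr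
  simp only [relsP, Set.mem_insert_iff, Set.mem_singleton_iff] at hr
  have s0 := sqA 0
  have s1 := sqA 1
  have s2 := sqA 2
  rcases hr with h | h | h | h | h | h | h <;> subst h <;>
    simp [y, gcomm, g4, mul_pow, mul_assoc, s0, s1, s2, sqA]

/-- The natural homomorphism from the free product of three copies of `ℤ/2`,
presented as `⟨a,b,c | a² = b² = c² = 1⟩`, to the group `P`, sending the generators `a, b, c`
to the generators `a, b, c` of `P`, is injective; in other words, the subgroup `H_3` of `H_4`
generated by `a, b, c` is isomorphic to `⟨a⟩₂ * ⟨b⟩₂ * ⟨c⟩₂`. -/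
theorem stmt_17 : ∃ ψ : A3 →* P,
    (∀ i : Fin 3, ψ (PresentedGroup.of (rels := relsA3) i) =
      PresentedGroup.of (rels := relsP) (Fin.castSucc i)) ∧
    Function.Injective ψ := by
  refine ⟨PresentedGroup.toGroup hf3, fun i => PresentedGroup.toGroup.of hf3, ?_⟩
  have hleft : ∀ x : A3,
      (PresentedGroup.toGroup hg4) ((PresentedGroup.toGroup hf3) x) = x := by
    have : (PresentedGroup.toGroup hg4).comp (PresentedGroup.toGroup hf3)
        = MonoidHom.id A3 := by
      apply PresentedGroup.ext
      intro x
      simp only [MonoidHom.comp_apply, MonoidHom.id_apply,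
        PresentedGroup.toGroup.of, f3]
      fin_cases x <;> rfl
    intro x
    exact DFunLike.congr_fun this x
  exact Function.LeftInverse.injective hleft
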